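/- Let K be a tensor-triangulated category and B ∈ K a rigid object. (a) The functor B ⊗ −: K → K is faithful if and only if the coevaluation coev: 1 → B ⊗ B^∨ is a split monomorphism, if and only if the relative stable category S(K;B) = K/add(B ⊗ K) is the zero category. (b) The objects B and B^∨, and more generally all the rigid objects B^{⊗m} ⊗ (B^∨)^{⊗n} for m, n > 0, define the same relative stable category S(K;B) (i.e. add(B ⊗ K) = add(B^∨ ⊗ K) = add(B^{⊗m} ⊗ (B^∨)^{⊗n} ⊗ K)). -/

import Mathlib

/-!
Common definitions for formalizing "Relative stable categories and birationality"
(Balmer–Stevenson): proper classes of triangles in the sense of Beligiannis,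
relative projectives/injectives, Frobenius classes, and abstract models of the
relative stable category together with Beligiannis' triangulation.
-/

noncomputable section

open CategoryTheory Limits Pretriangulated ZeroObject

universe v u v' u' v'' u'' v₁ u₁ v₂ u₂

namespace RelStable

variable {K : Type u} [Category.{v} K] [Preadditive K] [HasZeroObject K]
  [HasShift K ℤ] [∀ n : ℤ, (CategoryTheory.shiftFunctor K n).Additive] [Pretriangulated K]

/-- `f` is an `E`-monomorphism: it occurs as the first map of a triangle in `E`. -/
def SMono (E : Set (Triangle K)) {X Y : K} (f : X ⟶ Y) : Prop :=
  ∃ (Z : K) (g : Y ⟶ Z) (h : Z ⟶ X⟦(1:ℤ)⟧), Triangle.mk f g h ∈ E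

/-- `g` is an `E`-epimorphism: it occurs as the second map of a triangle in `E`. -/
def SEpi (E : Set (Triangle K)) {Y Z : K} (g : Y ⟶ Z) : Prop :=
  ∃ (X : K) (f : X ⟶ Y) (h : Z ⟶ X⟦(1:ℤ)⟧), Triangle.mk f g h ∈ E

/-- `h` is an `E`-phantom: up to isomorphism of its target with a suspension, it
occurs as the third map of a triangle in `E`. -/
def SPhantom (E : Set (Triangle K)) {Z W : K} (h : Z ⟶ W) : Prop :=
  ∃ (X Y : K) (f : X ⟶ Y) (g : Y ⟶ Z) (h' : Z ⟶ X⟦(1:ℤ)⟧) (e : (X⟦(1:ℤ)⟧ : K) ≅ W),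
    Triangle.mk f g h' ∈ E ∧ h = h' ≫ e.hom

/-- `P` is `E`-projective: `Hom(P,-)` takes triangles in `E` to short exact sequences. -/
def EProjective (E : Set (Triangle K)) (P : K) : Prop :=
  ∀ T ∈ E,
    (∀ a : P ⟶ T.obj₁, a ≫ T.mor₁ = 0 → a = 0) ∧
    (∀ b : P ⟶ T.obj₂, b ≫ T.mor₂ = 0 → ∃ a : P ⟶ T.obj₁, a ≫ T.mor₁ = b) ∧
    (∀ c : P ⟶ T.obj₃, ∃ b : P ⟶ T.obj₂, b ≫ T.mor₂ = c)

/-- `I` is `E`-injective: `Hom(-,I)` takes triangles in `E` to short exact sequences. -/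
def EInjective (E : Set (Triangle K)) (I : K) : Prop :=
  ∀ T ∈ E,
    (∀ a : T.obj₃ ⟶ I, T.mor₂ ≫ a = 0 → a = 0) ∧
    (∀ b : T.obj₂ ⟶ I, T.mor₁ ≫ b = 0 → ∃ a : T.obj₃ ⟶ I, T.mor₂ ≫ a = b) ∧
    (∀ c : T.obj₁ ⟶ I, ∃ b : T.obj₂ ⟶ I, T.mor₁ ≫ b = c)

/-- `K` has enough `E`-projectives: every object admits an `E`-projective precover. -/
def EnoughProjectives (E : Set (Triangle K)) : Prop :=
  ∀ X : K, ∃ (P : K) (p : P ⟶ X), EProjective E P ∧ SEpi E p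

/-- `K` has enough `E`-injectives: every object admits an `E`-injective preenvelope. -/
def EnoughInjectives (E : Set (Triangle K)) : Prop :=
  ∀ X : K, ∃ (I : K) (i : X ⟶ I), EInjective E I ∧ SMono E i

/-- The direct sum of two triangles. -/
def sumTriangle [HasBinaryBiproducts K] (T₁ T₂ : Triangle K) : Triangle K :=
  Triangle.mk (biprod.map T₁.mor₁ T₂.mor₁) (biprod.map T₁.mor₂ T₂.mor₂)
    (biprod.desc (T₁.mor₃ ≫ (shiftFunctor K (1:ℤ)).map biprod.inl)
      (T₂.mor₃ ≫ (shiftFunctor K (1:ℤ)).map biprod.inr))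

/-- A proper class of triangles in the sense of Beligiannis: a class of distinguished
triangles closed under isomorphism, suspension, finite direct sums and retracts,
containing the trivial triangles, whose `E`-monomorphisms are closed under homotopy
pushout, whose `E`-epimorphisms are closed under homotopy pullback, and which is
saturated. -/
structure IsProperClass [HasBinaryBiproducts K] (E : Set (Triangle K)) : Prop where
  subset_dist : ∀ T ∈ E, T ∈ (distTriang K)
  iso_closed : ∀ (T₁ T₂ : Triangle K), (T₁ ≅ T₂) → T₁ ∈ E → T₂ ∈ E
  shift_closed : ∀ T ∈ E, (Triangle.shiftFunctor K (1 : ℤ)).obj T ∈ E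
  sum_closed : ∀ T₁ T₂ : Triangle K, T₁ ∈ E → T₂ ∈ E → sumTriangle T₁ T₂ ∈ E
  retract_closed : ∀ (T₁ T₂ : Triangle K) (i : T₁ ⟶ T₂) (r : T₂ ⟶ T₁),
    i ≫ r = 𝟙 T₁ → T₂ ∈ E → T₁ ∈ E
  contractible₁ : ∀ X : K, contractibleTriangle X ∈ E
  contractible₂ : ∀ Y : K,
    Triangle.mk (0 : (0 : K) ⟶ Y) (𝟙 Y) (0 : Y ⟶ ((0 : K)⟦(1:ℤ)⟧)) ∈ E
  mono_pushout : ∀ {X Y X' : K} (f : X ⟶ Y), SMono E f → ∀ (t : X ⟶ X')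
    (W : K) (u : Y ⊞ X' ⟶ W) (v : W ⟶ X⟦(1:ℤ)⟧),
    Triangle.mk (biprod.lift f t) u v ∈ (distTriang K) → SMono E (biprod.inr ≫ u)
  epi_pullback : ∀ {Y Z Z' : K} (g : Y ⟶ Z), SEpi E g → ∀ (t : Z' ⟶ Z)
    (W : K) (w : W ⟶ Y ⊞ Z') (v : Z ⟶ W⟦(1:ℤ)⟧),
    Triangle.mk w (biprod.desc g t) v ∈ (distTriang K) → SEpi E (w ≫ biprod.snd)
  saturated : ∀ {Y Z : K} (g : Y ⟶ Z), SEpi E g → ∀ {W : K} (k : Z ⟶ W),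
    SPhantom E (g ≫ k) → SPhantom E k

/-- A Frobenius class of triangles: enough projectives, enough injectives, and the
projectives coincide with the injectives. -/
structure IsFrobenius (E : Set (Triangle K)) : Prop where
  enough_proj : EnoughProjectives E
  enough_inj : EnoughInjectives E
  proj_eq_inj : ∀ X : K, EProjective E X ↔ EInjective E X

/-- A morphism factoring through an `E`-projective(-injective) object; these are the
morphisms killed by the quotient functor to the relative stable category. -/
def FactorsThroughProj (E : Set (Triangle K)) {X Y : K} (f : X ⟶ Y) : Prop :=
  ∃ (P : K) (a : X ⟶ P) (b : P ⟶ Y), EProjective E P ∧ a ≫ b = f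

/-- The image of a triangle under a functor equipped with a commutation with shift. -/
def mapTri {C : Type u'} {D : Type v'} [Category C] [Category D]
    [HasShift C ℤ] [HasShift D ℤ] (F : C ⥤ D) (hc : F.CommShift ℤ) (T : Triangle C) :
    Triangle D :=
  Triangle.mk (F.map T.mor₁) (F.map T.mor₂)
    (F.map T.mor₃ ≫ (Functor.CommShift.commShiftIso (self := hc) F (1:ℤ)).hom.app T.obj₁)

/-- An exact (triangulated) functor: additive, commutes with the shift, and sends
distinguished triangles to distinguished triangles. -/
def IsExactFunctor {C : Type u'} {D : Type v'} [Category C] [Category D]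
    [Preadditive C] [Preadditive D] [HasZeroObject C] [HasZeroObject D]
    [HasShift C ℤ] [HasShift D ℤ]
    [∀ n : ℤ, (shiftFunctor C n).Additive] [∀ n : ℤ, (shiftFunctor D n).Additive]
    [Pretriangulated C] [Pretriangulated D] (F : C ⥤ D) : Prop :=
  F.Additive ∧ ∃ hc : F.CommShift ℤ, ∀ T ∈ (distTriang C), mapTri F hc T ∈ (distTriang D)

/-- An abstract model of the relative stable category `S(K;E) = K/proj(E)` together
with Beligiannis' triangulation: a pretriangulated category `S` and an additive
quotient functor `π : K ⥤ S` killing exactly the maps factoring through `proj(E)`,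
such that the suspension of `S` is computed by cofibres of `inj(E)`-preenvelopes,
image-triangles of triangles of `E` are distinguished, and every distinguished
triangle of `S` is isomorphic to such an image-triangle. -/
structure StableModel (E : Set (Triangle K)) where
  S : Type u
  [cat : Category.{v} S]
  [preadd : Preadditive S]
  [zobj : HasZeroObject S]
  [hshift : HasShift S ℤ]
  [shiftAdd : ∀ n : ℤ, (shiftFunctor S n).Additive]
  [pretri : Pretriangulated S]
  π : K ⥤ S
  [πAdd : π.Additive]
  π_full : π.Full
  π_essSurj : π.EssSurj
  π_map_zero_iff : ∀ {X Y : K} (f : X ⟶ Y), π.map f = 0 ↔ FactorsThroughProj E f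
  susp : ∀ T ∈ E, EInjective E T.obj₂ →
    Nonempty (π.obj T.obj₃ ≅ (π.obj T.obj₁)⟦(1:ℤ)⟧)
  imageTriangle_distinguished : ∀ T ∈ E,
    ∃ h' : π.obj T.obj₃ ⟶ (π.obj T.obj₁)⟦(1:ℤ)⟧,
      Triangle.mk (π.map T.mor₁) (π.map T.mor₂) h' ∈ (distTriang S)
  distinguished_iso_image : ∀ T' ∈ (distTriang S), ∃ T ∈ E,
    ∃ h' : π.obj T.obj₃ ⟶ (π.obj T.obj₁)⟦(1:ℤ)⟧,
      Triangle.mk (π.map T.mor₁) (π.map T.mor₂) h' ∈ (distTriang S) ∧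
      Nonempty (T' ≅ Triangle.mk (π.map T.mor₁) (π.map T.mor₂) h')

attribute [instance] StableModel.cat StableModel.preadd StableModel.zobj
  StableModel.hshift StableModel.shiftAdd StableModel.pretri StableModel.πAdd


/-- A morphism factoring through an `E`-injective object. -/
def FactorsThroughInj (E : Set (Triangle K)) {X Y : K} (f : X ⟶ Y) : Prop :=
  ∃ (I : K) (a : X ⟶ I) (b : I ⟶ Y), EInjective E I ∧ a ≫ b = f

/-- The `F`-split triangles: distinguished triangles whose third map is killed by `F`. -/
def splitClass {C : Type u'} {D : Type v'} [Category C] [Category D] [Preadditive C]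
    [HasZeroObject C] [HasShift C ℤ] [∀ n : ℤ, (shiftFunctor C n).Additive]
    [Pretriangulated C] [Limits.HasZeroMorphisms D] (F : C ⥤ D) : Set (Triangle C) :=
  {T | T ∈ (distTriang C) ∧ F.map T.mor₃ = 0}

/-- The closure of a class of objects under finite direct sums and direct summands. -/
inductive AddClosure {C : Type u'} [Category.{v'} C] [Preadditive C] [HasZeroObject C]
    [HasBinaryBiproducts C] (A : Set C) : C → Prop
  | of (X : C) (hX : X ∈ A) : AddClosure A X
  | zero (X : C) (hX : IsZero X) : AddClosure A X
  | sum (X Y : C) (hX : AddClosure A X) (hY : AddClosure A Y) : AddClosure A (X ⊞ Y)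
  | summand (X Y Z : C) (hZ : AddClosure A Z) (e : (X ⊞ Y) ≅ Z) : AddClosure A X
  | isoClosed (X Y : C) (hX : AddClosure A X) (e : X ≅ Y) : AddClosure A Y

open MonoidalCategory in
/-- A tensor-triangulated structure: tensoring on either side is exact (commutes with
the shift and preserves distinguished triangles), and the two commutation isomorphisms
satisfy the usual Koszul sign rule. -/
def TensorTriangulatedOn (C : Type u') [Category.{v'} C] [Preadditive C] [HasZeroObject C]
    [HasShift C ℤ] [∀ n : ℤ, (shiftFunctor C n).Additive] [Pretriangulated C]
    [MonoidalCategory C] : Prop :=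
  ∃ (cL : ∀ X : C, (tensorLeft X).CommShift ℤ)
    (cR : ∀ X : C, (tensorRight X).CommShift ℤ),
    (∀ X : C, ∀ T ∈ (distTriang C), mapTri (tensorLeft X) (cL X) T ∈ (distTriang C)) ∧
    (∀ X : C, ∀ T ∈ (distTriang C), mapTri (tensorRight X) (cR X) T ∈ (distTriang C)) ∧
    (∀ X Y : C,
      (Functor.CommShift.commShiftIso (self := cL ((X⟦(1:ℤ)⟧ : C))) (tensorLeft ((X⟦(1:ℤ)⟧ : C))) (1:ℤ)).hom.app Y ≫
          (shiftFunctor C (1:ℤ)).map ((Functor.CommShift.commShiftIso (self := cR Y) (tensorRight Y) (1:ℤ)).hom.app X) =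
        -((Functor.CommShift.commShiftIso (self := cR ((Y⟦(1:ℤ)⟧ : C))) (tensorRight ((Y⟦(1:ℤ)⟧ : C))) (1:ℤ)).hom.app X ≫
          (shiftFunctor C (1:ℤ)).map ((Functor.CommShift.commShiftIso (self := cL X) (tensorLeft X) (1:ℤ)).hom.app Y)))

section TTK

variable [MonoidalCategory K]

open MonoidalCategory

/-- `E` is closed under tensoring, expressed on the ideal of `E`-phantoms. -/
def TensorClosedClass (E : Set (Triangle K)) : Prop :=
  ∀ (W : K) {Z Z' : K} (h : Z ⟶ Z'), SPhantom E h → SPhantom E (W ◁ h)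

/-- `E` is closed under `hom(W,-)` for all `W`, expressed on the ideal of
`E`-phantoms. -/
def HomClosedClass [MonoidalClosed K] (E : Set (Triangle K)) : Prop :=
  ∀ (W : K) {Z Z' : K} (h : Z ⟶ Z'), SPhantom E h → SPhantom E ((ihom W).map h)

/-- A model of the relative stable category together with its symmetric monoidal
structure, for which the quotient functor is monoidal. -/
structure MonoidalStableModel (E : Set (Triangle K)) extends StableModel E where
  [monS : MonoidalCategory S]
  [symmS : SymmetricCategory S]
  [πMon : π.Monoidal]

attribute [instance] MonoidalStableModel.monS MonoidalStableModel.symmS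
  MonoidalStableModel.πMon

/-- The class of `B`-split triangles: distinguished triangles whose third map is
killed by `B ⊗ -`. -/
def BSplit (B : K) : Set (Triangle K) :=
  {T | T ∈ (distTriang K) ∧ B ◁ T.mor₃ = 0}

/-- The tensor multiples `B ⊗ K` of an object `B`. -/
def tensMultiples (B : K) : Set K := {Y | ∃ Z : K, Nonempty (Y ≅ B ⊗ Z)}

/-- Tensor powers of an object. -/
def tpow (B : K) : ℕ → K
  | 0 => 𝟙_ K
  | (n + 1) => B ⊗ tpow B n

end TTK

set_option linter.unusedSectionVars false

section Auxiliary

open MonoidalCategory BraidedCategory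

variable {K : Type u} [Category.{v} K] [Preadditive K] [HasZeroObject K]
  [HasShift K ℤ] [∀ n : ℤ, (CategoryTheory.shiftFunctor K n).Additive] [Pretriangulated K]

/-- `X` is a retract of `Q`. -/
def IsRetractOf (X Q : K) : Prop := ∃ (s : X ⟶ Q) (t : Q ⟶ X), s ≫ t = 𝟙 X

lemma IsRetractOf.rfl (X : K) : IsRetractOf X X := ⟨𝟙 X, 𝟙 X, by simp⟩

lemma IsRetractOf.trans {X Q R : K} (h1 : IsRetractOf X Q) (h2 : IsRetractOf Q R) :
    IsRetractOf X R := by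
  obtain ⟨s, t, hst⟩ := h1
  obtain ⟨u, v, huv⟩ := h2
  exact ⟨s ≫ u, v ≫ t, by
    rw [Category.assoc, ← Category.assoc u, huv, Category.id_comp, hst]⟩

lemma retract_of_iso {X Q : K} (e : X ≅ Q) : IsRetractOf X Q :=
  ⟨e.hom, e.inv, e.hom_inv_id⟩

lemma IsRetractOf.ofIsoTarget {X Q Q' : K} (h : IsRetractOf X Q) (e : Q ≅ Q') :
    IsRetractOf X Q' := h.trans (retract_of_iso e)

lemma IsRetractOf.ofIsoSource {X X' Q : K} (h : IsRetractOf X Q) (e : X' ≅ X) :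
    IsRetractOf X' Q := (retract_of_iso e).trans h

section Monoidal

variable [MonoidalCategory K]

lemma IsRetractOf.whiskerRightBy {X Q : K} (h : IsRetractOf X Q) (Z : K) :
    IsRetractOf (X ⊗ Z) (Q ⊗ Z) := by
  obtain ⟨s, t, hst⟩ := h
  exact ⟨s ▷ Z, t ▷ Z, by rw [← comp_whiskerRight, hst, id_whiskerRight]⟩

lemma IsRetractOf.whiskerLeftBy {X Q : K} (h : IsRetractOf X Q) (Z : K) :
    IsRetractOf (Z ⊗ X) (Z ⊗ Q) := by
  obtain ⟨s, t, hst⟩ := h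
  exact ⟨Z ◁ s, Z ◁ t, by rw [← MonoidalCategory.whiskerLeft_comp, hst,
    MonoidalCategory.whiskerLeft_id]⟩

end Monoidal

section WhiskerZero

variable [MonoidalCategory K] [SymmetricCategory K] [MonoidalPreadditive K]

lemma wzero_inner {X Y : K} {f : X ⟶ Y} (W V : K) (h : W ◁ f = 0) :
    W ◁ (V ◁ f) = 0 := by
  have h1 : V ◁ f = (β_ V X).hom ≫ (f ▷ V) ≫ (β_ V Y).inv := by
    rw [← Category.assoc, Iso.eq_comp_inv]
    exact braiding_naturality_right V f
  have h2 : W ◁ (f ▷ V) = 0 := by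
    have h3 := (whisker_assoc W f V).symm
    rw [h, MonoidalPreadditive.zero_whiskerRight] at h3
    rw [← cancel_epi (α_ W X V).hom, ← cancel_mono (α_ W Y V).inv]
    simpa using h3
  rw [h1, MonoidalCategory.whiskerLeft_comp, MonoidalCategory.whiskerLeft_comp, h2,
    zero_comp, comp_zero]

lemma wzero_left {X Y : K} {f : X ⟶ Y} (W V : K) (h : W ◁ f = 0) :
    (W ⊗ V) ◁ f = 0 := by
  rw [tensor_whiskerLeft, wzero_inner W V h]
  simp

lemma wzero_right {X Y : K} {f : X ⟶ Y} (W V : K) (h : W ◁ f = 0) :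
    (V ⊗ W) ◁ f = 0 := by
  rw [tensor_whiskerLeft, h]
  simp

lemma wzero_dual {X Y : K} {f : X ⟶ Y} (B : K) [HasRightDual B] (h : B ◁ f = 0) :
    (Bᘁ : K) ◁ f = 0 := by
  have hM : ((Bᘁ : K) ⊗ (B ⊗ (Bᘁ : K))) ◁ f = 0 :=
    wzero_right _ _ (wzero_left B (Bᘁ : K) h)
  set s : (Bᘁ : K) ⟶ (Bᘁ : K) ⊗ (B ⊗ (Bᘁ : K)) :=
    (ρ_ _).inv ≫ (Bᘁ : K) ◁ η_ B (Bᘁ) with hs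
  set t : (Bᘁ : K) ⊗ (B ⊗ (Bᘁ : K)) ⟶ (Bᘁ : K) :=
    (α_ _ _ _).inv ≫ ε_ B (Bᘁ) ▷ (Bᘁ : K) ≫ (λ_ _).hom with ht
  have hst : s ≫ t = 𝟙 _ := by
    rw [hs, ht]
    simp
  have h5 := whisker_exchange s f
  calc (Bᘁ : K) ◁ f = ((Bᘁ : K) ◁ f ≫ s ▷ Y) ≫ t ▷ Y := by
        rw [Category.assoc, ← comp_whiskerRight, hst, id_whiskerRight, Category.comp_id]
    _ = (s ▷ X ≫ ((Bᘁ : K) ⊗ (B ⊗ (Bᘁ : K))) ◁ f) ≫ t ▷ Y := by rw [h5]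
    _ = 0 := by rw [hM, comp_zero, zero_comp]

lemma eq_zero_of_unit_retract {Q : K} (hQ : IsRetractOf (𝟙_ K) Q) {X Y : K} {f : X ⟶ Y}
    (hf : Q ◁ f = 0) : f = 0 := by
  obtain ⟨s, t, hst⟩ := hQ
  have h5 := whisker_exchange s f
  rw [hf, comp_zero] at h5
  have h6 : (𝟙_ K) ◁ f ≫ (s ≫ t) ▷ Y = 0 := by
    rw [comp_whiskerRight, ← Category.assoc, h5, zero_comp]
  rw [hst, id_whiskerRight, Category.comp_id, id_whiskerLeft] at h6
  rw [← cancel_epi (λ_ X).hom, ← cancel_mono (λ_ Y).inv, comp_zero, zero_comp]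
  simpa using h6

end WhiskerZero

section Triangulated

lemma mor₃_eq_zero_of_splitMono {T : Triangle K} (hT : T ∈ distTriang K)
    (r : T.obj₂ ⟶ T.obj₁) (hr : T.mor₁ ≫ r = 𝟙 _) : T.mor₃ = 0 := by
  haveI : IsSplitMono T.mor₁ := ⟨⟨⟨r, hr⟩⟩⟩
  exact T.mor₃_eq_zero_of_mono₁ hT inferInstance

lemma exists_biprod_iso_of_retract [HasBinaryBiproducts K] {P Q : K} (s : P ⟶ Q) (t : Q ⟶ P)
    (hst : s ≫ t = 𝟙 P) : ∃ (C : K), Nonempty (Q ≅ P ⊞ C) := by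
  obtain ⟨C, g, h, hT⟩ := distinguished_cocone_triangle s
  have h0 : h = 0 := mor₃_eq_zero_of_splitMono hT t hst
  have hsg : s ≫ g = 0 := comp_distTriang_mor_zero₁₂ _ hT
  let φ : Triangle.mk s g h ⟶ binaryBiproductTriangle P C :=
    { hom₁ := 𝟙 P
      hom₂ := biprod.lift t g
      hom₃ := 𝟙 C
      comm₁ := by
        show s ≫ biprod.lift t g = 𝟙 P ≫ biprod.inl
        apply biprod.hom_ext <;> simp [hst, hsg]
      comm₂ := by show g ≫ 𝟙 C = biprod.lift t g ≫ biprod.snd; simp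
      comm₃ := by show h ≫ (shiftFunctor K 1).map (𝟙 P) = 𝟙 C ≫ 0; simp [h0] }
  haveI : IsIso φ.hom₁ := by dsimp [φ]; exact IsIso.id P
  haveI : IsIso φ.hom₃ := by dsimp [φ]; exact IsIso.id C
  haveI := isIso₂_of_isIso₁₃ φ hT (binaryBiproductTriangle_distinguished P C)
    inferInstance inferInstance
  exact ⟨C, ⟨@asIso _ _ _ _ φ.hom₂ this⟩⟩

end Triangulated

section Main

variable [HasBinaryBiproducts K] [MonoidalCategory K] [SymmetricCategory K]
  [MonoidalPreadditive K]

lemma addClosure_iff_retract (A X : K) :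
    AddClosure (tensMultiples A) X ↔ ∃ W, IsRetractOf X (A ⊗ W) := by
  constructor
  · intro hX
    induction hX with
    | of X hX =>
      obtain ⟨Z, ⟨e⟩⟩ := hX
      exact ⟨Z, retract_of_iso e⟩
    | zero X hX =>
      exact ⟨X, 0, 0, by rw [comp_zero]; exact ((IsZero.iff_id_eq_zero _).1 hX).symm⟩
    | sum X Y hX hY ihX ihY =>
      obtain ⟨W₁, s₁, t₁, h₁⟩ := ihX
      obtain ⟨W₂, s₂, t₂, h₂⟩ := ihY
      refine ⟨W₁ ⊞ W₂, biprod.map s₁ s₂ ≫ biprod.desc (A ◁ biprod.inl) (A ◁ biprod.inr),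
        biprod.lift (A ◁ biprod.fst) (A ◁ biprod.snd) ≫ biprod.map t₁ t₂, ?_⟩
      apply biprod.hom_ext <;> apply biprod.hom_ext' <;>
        simp [h₁, h₂, ← MonoidalCategory.whiskerLeft_comp, ← MonoidalCategory.whiskerLeft_comp_assoc]
    | summand X Y Z hZ e ih =>
      obtain ⟨W, s, t, h⟩ := ih
      refine ⟨W, biprod.inl ≫ e.hom ≫ s, t ≫ e.inv ≫ biprod.fst, ?_⟩
      simp only [Category.assoc]
      rw [← Category.assoc s, h, Category.id_comp, e.hom_inv_id_assoc, biprod.inl_fst]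
    | isoClosed X Y hX e ih =>
      obtain ⟨W, s, t, h⟩ := ih
      exact ⟨W, e.inv ≫ s, t ≫ e.hom, by
        rw [Category.assoc, ← Category.assoc s, h, Category.id_comp, e.inv_hom_id]⟩
  · rintro ⟨W, s, t, h⟩
    obtain ⟨C, ⟨e⟩⟩ := exists_biprod_iso_of_retract s t h
    exact AddClosure.summand _ _ _ (AddClosure.of _ ⟨W, ⟨Iso.refl _⟩⟩) e.symm

lemma whisker_mor₃_zero_of_splitMono (htt : TensorTriangulatedOn K) (W : K) {T : Triangle K}
    (hT : T ∈ distTriang K) (hsm : ∃ r, (W ◁ T.mor₁) ≫ r = 𝟙 (W ⊗ T.obj₁ : K)) :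
    W ◁ T.mor₃ = 0 := by
  obtain ⟨cL, cR, hL, hR, -⟩ := htt
  have hT' := hL W T hT
  obtain ⟨r, hr⟩ := hsm
  have h0 : (mapTri (tensorLeft W) (cL W) T).mor₃ = 0 :=
    mor₃_eq_zero_of_splitMono hT' r hr
  have h1 : (W ◁ T.mor₃) ≫ (Functor.CommShift.commShiftIso (self := cL W) (tensorLeft W) (1:ℤ)).hom.app T.obj₁ = 0 := h0
  rwa [Preadditive.IsIso.comp_right_eq_zero] at h1

lemma whisker_mor₃_zero_of_splitEpi (htt : TensorTriangulatedOn K) (W : K) {T : Triangle K}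
    (hT : T ∈ distTriang K) (hse : ∃ σ, σ ≫ (W ◁ T.mor₂) = 𝟙 (W ⊗ T.obj₃ : K)) :
    W ◁ T.mor₃ = 0 := by
  obtain ⟨cL, cR, hL, hR, -⟩ := htt
  have hT' := hL W T hT
  obtain ⟨σ, hσ⟩ := hse
  haveI : IsSplitEpi ((mapTri (tensorLeft W) (cL W) T).mor₂) := ⟨⟨⟨σ, hσ⟩⟩⟩
  have h0 : (mapTri (tensorLeft W) (cL W) T).mor₃ = 0 :=
    (mapTri (tensorLeft W) (cL W) T).mor₃_eq_zero_of_epi₂ hT' inferInstance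
  have h1 : (W ◁ T.mor₃) ≫ (Functor.CommShift.commShiftIso (self := cL W) (tensorLeft W) (1:ℤ)).hom.app T.obj₁ = 0 := h0
  rwa [Preadditive.IsIso.comp_right_eq_zero] at h1

lemma whisker_dist_of_mor₃_zero (htt : TensorTriangulatedOn K) (W : K) {T : Triangle K}
    (hT : T ∈ distTriang K) (h3 : W ◁ T.mor₃ = 0) :
    Triangle.mk (W ◁ T.mor₁) (W ◁ T.mor₂) 0 ∈ distTriang K := by
  obtain ⟨cL, cR, hL, hR, -⟩ := htt
  have hT' := hL W T hT
  refine isomorphic_distinguished _ hT' _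
    (Triangle.isoMk _ _ (Iso.refl _) (Iso.refl _) (Iso.refl _) ?_ ?_ ?_)
  · exact (Category.comp_id _).trans (Category.id_comp _).symm
  · exact (Category.comp_id _).trans (Category.id_comp _).symm
  · have h1 : (W ◁ T.mor₃) ≫ (Functor.CommShift.commShiftIso (self := cL W) (tensorLeft W) (1:ℤ)).hom.app T.obj₁ = 0 := by
      rw [h3, zero_comp]
    exact zero_comp.trans ((Category.id_comp _).trans h1).symm

variable (B : K) [HasRightDual B]

lemma eprojective_dualTensor (htt : TensorTriangulatedOn K) (W : K) :
    EProjective (BSplit B) ((Bᘁ : K) ⊗ W) := by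
  intro T hT
  obtain ⟨hTd, h3⟩ := hT
  have hT'' := whisker_dist_of_mor₃_zero htt B hTd h3
  set T'' : Triangle K := Triangle.mk (B ◁ T.mor₁) (B ◁ T.mor₂) 0 with hT''def
  have e0 : ∀ {U : K}, (tensorLeftHomEquiv W B (Bᘁ) U) 0 = 0 := by
    intro U
    rw [show (0 : (Bᘁ : K) ⊗ W ⟶ U) = 0 ≫ (0 : U ⟶ U) by simp,
      tensorLeftHomEquiv_naturality]
    simp
  refine ⟨?_, ?_, ?_⟩
  · intro a ha
    have h1 : (tensorLeftHomEquiv W B (Bᘁ) T.obj₁) a ≫ (B ◁ T.mor₁) = 0 := by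
      rw [← tensorLeftHomEquiv_naturality, ha, e0]
    haveI : Mono (B ◁ T.mor₁) := T''.mono₁ hT'' rfl
    have h2 : (tensorLeftHomEquiv W B (Bᘁ) T.obj₁) a = 0 :=
      zero_of_comp_mono (B ◁ T.mor₁) h1
    apply (tensorLeftHomEquiv W B (Bᘁ) T.obj₁).injective
    rw [h2, e0]
  · intro b hb
    have h1 : (tensorLeftHomEquiv W B (Bᘁ) T.obj₂) b ≫ (B ◁ T.mor₂) = 0 := by
      rw [← tensorLeftHomEquiv_naturality, hb, e0]
    obtain ⟨a', ha'⟩ : ∃ a' : W ⟶ B ⊗ T.obj₁, (tensorLeftHomEquiv W B (Bᘁ) T.obj₂) b = a' ≫ (B ◁ T.mor₁) :=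
      Triangle.coyoneda_exact₂ _ hT'' _ h1
    refine ⟨(tensorLeftHomEquiv W B (Bᘁ) T.obj₁).symm a', ?_⟩
    apply (tensorLeftHomEquiv W B (Bᘁ) T.obj₂).injective
    rw [tensorLeftHomEquiv_naturality, Equiv.apply_symm_apply]
    exact ha'.symm
  · intro c
    obtain ⟨b', hb'⟩ : ∃ b' : W ⟶ B ⊗ T.obj₂, (tensorLeftHomEquiv W B (Bᘁ) T.obj₃) c = b' ≫ (B ◁ T.mor₂) :=
      Triangle.coyoneda_exact₃ _ hT''
      ((tensorLeftHomEquiv W B (Bᘁ) T.obj₃) c) comp_zero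
    refine ⟨(tensorLeftHomEquiv W B (Bᘁ) T.obj₂).symm b', ?_⟩
    apply (tensorLeftHomEquiv W B (Bᘁ) T.obj₃).injective
    rw [tensorLeftHomEquiv_naturality, Equiv.apply_symm_apply]
    exact hb'.symm

lemma eprojective_retract (htt : TensorTriangulatedOn K) {P : K}
    (hP : EProjective (BSplit B) P) : ∃ W, IsRetractOf P ((Bᘁ : K) ⊗ W) := by
  set m : (Bᘁ : K) ⊗ (B ⊗ P) ⟶ P :=
    (tensorLeftHomEquiv (B ⊗ P) B (Bᘁ) P).symm (𝟙 (B ⊗ P)) with hm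
  obtain ⟨X₀, w, v, hT₀⟩ := distinguished_cocone_triangle₁ m
  have hθ : (tensorLeftHomEquiv (B ⊗ P) B (Bᘁ) P) m = 𝟙 (B ⊗ P) := by
    rw [hm, Equiv.apply_symm_apply]
  have hσ : ((λ_ (B ⊗ P)).inv ≫ η_ B (Bᘁ) ▷ (B ⊗ P) ≫ (α_ B (Bᘁ) (B ⊗ P)).hom) ≫ (B ◁ m)
      = 𝟙 (B ⊗ P) := by
    simpa [tensorLeftHomEquiv] using hθ
  have hv : B ◁ v = 0 :=
    whisker_mor₃_zero_of_splitEpi htt B hT₀ ⟨_, hσ⟩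
  obtain ⟨b, hb⟩ := (hP (Triangle.mk w m v) ⟨hT₀, hv⟩).2.2 (𝟙 P)
  exact ⟨B ⊗ P, b, m, hb⟩

lemma whiskerLeft_coev_retraction :
    ∃ r, (B ◁ η_ B (Bᘁ)) ≫ r = 𝟙 (B ⊗ 𝟙_ K) := by
  set t₀ : (B ⊗ (Bᘁ : K)) ⊗ B ⟶ 𝟙_ K ⊗ B :=
    (α_ B (Bᘁ) B).hom ≫ B ◁ ε_ B (Bᘁ) ≫ (ρ_ B).hom ≫ (λ_ B).inv with ht₀
  have t₀h : (η_ B (Bᘁ) ▷ B) ≫ t₀ = 𝟙 (𝟙_ K ⊗ B) := by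
    rw [ht₀]
    simp
  have hnat : B ◁ η_ B (Bᘁ) ≫ (β_ B (B ⊗ (Bᘁ : K))).hom
      = (β_ B (𝟙_ K)).hom ≫ η_ B (Bᘁ) ▷ B := braiding_naturality_right B (η_ B (Bᘁ))
  refine ⟨(β_ B (B ⊗ (Bᘁ : K))).hom ≫ t₀ ≫ (β_ B (𝟙_ K)).inv, ?_⟩
  calc (B ◁ η_ B (Bᘁ)) ≫ ((β_ B (B ⊗ (Bᘁ : K))).hom ≫ t₀ ≫ (β_ B (𝟙_ K)).inv)
      = (B ◁ η_ B (Bᘁ) ≫ (β_ B (B ⊗ (Bᘁ : K))).hom) ≫ t₀ ≫ (β_ B (𝟙_ K)).inv := by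
        simp only [Category.assoc]
    _ = (β_ B (𝟙_ K)).hom ≫ ((η_ B (Bᘁ) ▷ B) ≫ t₀) ≫ (β_ B (𝟙_ K)).inv := by
        rw [hnat]
        simp only [Category.assoc]
    _ = 𝟙 (B ⊗ 𝟙_ K) := by rw [t₀h, Category.id_comp, Iso.hom_inv_id]

lemma exists_coev_triangle (htt : TensorTriangulatedOn K) :
    ∃ (Q : K) (g : B ⊗ (Bᘁ : K) ⟶ Q) (h : Q ⟶ (𝟙_ K : K)⟦(1:ℤ)⟧),
      Triangle.mk (η_ B (Bᘁ)) g h ∈ (distTriang K) ∧ B ◁ h = 0 := by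
  obtain ⟨Q, g, h, hT⟩ := distinguished_cocone_triangle (η_ B (Bᘁ))
  exact ⟨Q, g, h, hT,
    whisker_mor₃_zero_of_splitMono htt B hT (whiskerLeft_coev_retraction B)⟩

lemma isSplitMono_coev_of_kill (htt : TensorTriangulatedOn K)
    (hf : ∀ {X Y : K} (f : X ⟶ Y), B ◁ f = 0 → f = 0) : IsSplitMono (η_ B (Bᘁ)) := by
  obtain ⟨Q, g, h, hT, hBh⟩ := exists_coev_triangle B htt
  have h0 : h = 0 := hf h hBh
  have hT'' := inv_rot_of_distTriang _ hT
  have hm : (Triangle.mk (η_ B (Bᘁ)) g h).invRotate.mor₁ = 0 := by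
    dsimp [Triangle.invRotate]
    rw [h0]
    simp
    have key : ∀ (x : ((𝟙_ K)⟦(1:ℤ)⟧)⟦(-1:ℤ)⟧ ⟶ 𝟙_ K),
        -(shiftFunctor K (-1)).map (0 : Q ⟶ (𝟙_ K)⟦(1:ℤ)⟧) ≫ x = 0 := by
      intro x
      simp
    exact key _
  obtain ⟨r, hr⟩ := Triangle.yoneda_exact₂ _ hT'' (𝟙 (𝟙_ K)) (by rw [hm]; exact zero_comp)
  exact ⟨⟨⟨r, hr.symm⟩⟩⟩

lemma retract_B : IsRetractOf B ((B ⊗ (Bᘁ : K)) ⊗ B) := by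
  refine ⟨(λ_ B).inv ≫ η_ B (Bᘁ) ▷ B, (α_ _ _ _).hom ≫ B ◁ ε_ B (Bᘁ) ≫ (ρ_ B).hom, ?_⟩
  simp

lemma retract_dual : IsRetractOf ((Bᘁ : K)) ((Bᘁ : K) ⊗ (B ⊗ (Bᘁ : K))) := by
  refine ⟨(ρ_ _).inv ≫ (Bᘁ : K) ◁ η_ B (Bᘁ),
    (α_ _ _ _).inv ≫ ε_ B (Bᘁ) ▷ (Bᘁ : K) ≫ (λ_ _).hom, ?_⟩
  simp

lemma tensor_retract_dualTensor (Z : K) :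
    IsRetractOf (B ⊗ Z) ((Bᘁ : K) ⊗ (B ⊗ (B ⊗ Z))) :=
  ((retract_B B).whiskerRightBy Z).ofIsoTarget
    ((α_ _ _ _) ≪≫ whiskerRightIso (β_ B (Bᘁ : K)) (B ⊗ Z) ≪≫ (α_ _ _ _))

lemma dualTensor_retract_tensor (Z : K) :
    IsRetractOf ((Bᘁ : K) ⊗ Z) (B ⊗ (((Bᘁ : K) ⊗ (Bᘁ : K)) ⊗ Z)) :=
  ((retract_dual B).whiskerRightBy Z).ofIsoTarget
    (whiskerRightIso ((β_ (Bᘁ : K) (B ⊗ (Bᘁ : K))) ≪≫ (α_ B (Bᘁ : K) (Bᘁ : K))) Z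
      ≪≫ (α_ _ _ _))

lemma retract_unit_tensor (hsm : IsSplitMono (η_ B (Bᘁ))) (X : K) :
    IsRetractOf X (B ⊗ ((Bᘁ : K) ⊗ X)) := by
  refine ⟨(λ_ X).inv ≫ η_ B (Bᘁ) ▷ X ≫ (α_ _ _ _).hom,
    (α_ _ _ _).inv ≫ retraction (η_ B (Bᘁ)) ▷ X ≫ (λ_ X).hom, ?_⟩
  have : η_ B (Bᘁ) ▷ X ≫ retraction (η_ B (Bᘁ)) ▷ X = 𝟙 _ := by
    rw [← comp_whiskerRight, IsSplitMono.id, id_whiskerRight]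
  simp only [Category.assoc, Iso.hom_inv_id_assoc]
  rw [← Category.assoc (η_ B (Bᘁ) ▷ X), this, Category.id_comp, Iso.inv_hom_id]

/-- Iterated `(B ⊗ Bᘁ) ⊗ ·` applied to `B`. -/
def QIter : ℕ → K
  | 0 => B
  | (k+1) => (B ⊗ (Bᘁ : K)) ⊗ QIter k

lemma retract_QIter : ∀ k, IsRetractOf B (QIter B k)
  | 0 => IsRetractOf.rfl B
  | (k+1) => (retract_B B).trans ((retract_QIter k).whiskerLeftBy (B ⊗ (Bᘁ : K)))

/-- The middle-interchange isomorphism. -/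
def swap23Iso (X₁ X₂ Y₁ Y₂ : K) : (X₁ ⊗ X₂) ⊗ (Y₁ ⊗ Y₂) ≅ (X₁ ⊗ Y₁) ⊗ (X₂ ⊗ Y₂) :=
  (α_ _ _ _) ≪≫ whiskerLeftIso X₁
    ((α_ X₂ Y₁ Y₂).symm ≪≫ whiskerRightIso (β_ X₂ Y₁) Y₂ ≪≫ (α_ Y₁ X₂ Y₂))
    ≪≫ (α_ X₁ Y₁ (X₂ ⊗ Y₂)).symm

/-- Tensor powers add up. -/
def tpowAddIso (A : K) : (a b : ℕ) → (tpow A (a + b) ≅ tpow A a ⊗ tpow A b)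
  | 0, b => eqToIso (by rw [Nat.zero_add]) ≪≫ (λ_ _).symm
  | (a+1), b =>
    (eqToIso (by rw [Nat.succ_add]) : tpow A ((a+1) + b) ≅ tpow A ((a+b)+1))
      ≪≫ whiskerLeftIso A (tpowAddIso A a b) ≪≫ (α_ _ _ _).symm

/-- `QIter B k` sorted into powers of `B` and `Bᘁ`. -/
def QIterIso : (k : ℕ) → (QIter B k ≅ tpow B (k+1) ⊗ tpow (Bᘁ : K) k)
  | 0 => (ρ_ B).symm ≪≫ (ρ_ (B ⊗ 𝟙_ K)).symm
  | (k+1) => whiskerLeftIso (B ⊗ (Bᘁ : K)) (QIterIso k)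
      ≪≫ swap23Iso B (Bᘁ : K) (tpow B (k+1)) (tpow (Bᘁ : K) k)

end Main


end Auxiliary


open MonoidalCategory in
/-- Proposition 7.14: (a) `B ⊗ -` is faithful iff the coevaluation `1 ⟶ B ⊗ B^∨` is a
split monomorphism, iff the relative stable category `S(K;B)` vanishes; (b) `B`, `B^∨`
and all `B^(⊗m) ⊗ (B^∨)^(⊗n)` for `m, n > 0` define the same relative stable category,
i.e. the same additive closure of tensor multiples. -/
theorem statement17 {K : Type u} [Category.{v} K] [Preadditive K] [HasZeroObject K]
    [HasShift K ℤ] [∀ n : ℤ, (shiftFunctor K n).Additive] [Pretriangulated K]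
    [HasBinaryBiproducts K] [MonoidalCategory K] [SymmetricCategory K] [MonoidalPreadditive K]
    (htt : TensorTriangulatedOn K)
    (B : K) [HasRightDual B]
    (D : StableModel (BSplit B)) :
    ((tensorLeft B).Faithful ↔ IsSplitMono (ExactPairing.coevaluation B (Bᘁ))) ∧
    (IsSplitMono (ExactPairing.coevaluation B (Bᘁ)) ↔ ∀ X : D.S, IsZero X) ∧
    (∀ X : K, AddClosure (tensMultiples B) X ↔ AddClosure (tensMultiples (Bᘁ)) X) ∧
    (∀ m n : ℕ, 0 < m → 0 < n → ∀ X : K,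
      AddClosure (tensMultiples (tpow B m ⊗ tpow (Bᘁ) n)) X ↔
        AddClosure (tensMultiples B) X) := by
  have hkill : IsSplitMono (η_ B (Bᘁ)) → ∀ {X Y : K} (f : X ⟶ Y), B ◁ f = 0 → f = 0 := by
    intro hsm X Y f hf
    have hr : IsRetractOf (𝟙_ K) (B ⊗ (Bᘁ : K)) :=
      ⟨η_ B (Bᘁ), retraction (η_ B (Bᘁ)), IsSplitMono.id _⟩
    exact eq_zero_of_unit_retract hr (wzero_left B (Bᘁ : K) hf)
  refine ⟨?_, ?_, ?_, ?_⟩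
  · constructor
    · intro hF
      apply isSplitMono_coev_of_kill B htt
      intro X Y f hf
      haveI := hF
      apply (tensorLeft B).map_injective
      rw [Functor.map_zero]
      exact hf
    · intro hsm
      refine ⟨fun {X Y} {f g} h => ?_⟩
      have hz : B ◁ (f - g) = 0 := by
        have h2 : (tensorLeft B).map (f - g) = 0 := by
          rw [Functor.map_sub, h, sub_self]
        exact h2
      exact sub_eq_zero.mp (hkill hsm _ hz)
  · constructor
    · intro hsm X'
      haveI := D.π_essSurj
      refine IsZero.of_iso ?_ (D.π.objObjPreimageIso X').symm
      rw [IsZero.iff_id_eq_zero, ← D.π.map_id, D.π_map_zero_iff]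
      obtain ⟨s, t, hst⟩ := (retract_unit_tensor B hsm (D.π.objPreimage X')).trans
        (tensor_retract_dualTensor B ((Bᘁ : K) ⊗ (D.π.objPreimage X')))
      exact ⟨_, s, t, eprojective_dualTensor B htt _, hst⟩
    · intro hz
      have h0 : D.π.map (𝟙 (𝟙_ K)) = 0 := by
        rw [D.π.map_id]
        exact (IsZero.iff_id_eq_zero _).1 (hz _)
      rw [D.π_map_zero_iff] at h0
      obtain ⟨P, a, b, hP, hab⟩ := h0
      obtain ⟨W, s, t, hst⟩ := eprojective_retract B htt hP
      have hr : IsRetractOf (𝟙_ K) ((Bᘁ : K) ⊗ W) := ⟨a ≫ s, t ≫ b, by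
        rw [Category.assoc, ← Category.assoc s, hst, Category.id_comp, hab]⟩
      apply isSplitMono_coev_of_kill B htt
      intro X Y f hf
      exact eq_zero_of_unit_retract hr (wzero_left _ _ (wzero_dual B hf))
  · intro X
    rw [addClosure_iff_retract, addClosure_iff_retract]
    constructor
    · rintro ⟨W, h⟩
      exact ⟨B ⊗ (B ⊗ W), h.trans (tensor_retract_dualTensor B W)⟩
    · rintro ⟨W, h⟩
      exact ⟨((Bᘁ : K) ⊗ (Bᘁ : K)) ⊗ W, h.trans (dualTensor_retract_tensor B W)⟩
  · intro m n hm hn X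
    rw [addClosure_iff_retract, addClosure_iff_retract]
    constructor
    · rintro ⟨Z, h⟩
      obtain ⟨m', rfl⟩ := Nat.exists_eq_succ_of_ne_zero (Nat.pos_iff_ne_zero.mp hm)
      refine ⟨tpow B m' ⊗ (tpow (Bᘁ : K) n ⊗ Z), h.ofIsoTarget ?_⟩
      exact whiskerRightIso (α_ B (tpow B m') (tpow (Bᘁ : K) n)) Z ≪≫ (α_ _ _ _)
        ≪≫ whiskerLeftIso B (α_ _ _ _)
    · rintro ⟨Z, h⟩
      have hq := h.trans ((retract_QIter B (m + n)).whiskerRightBy Z)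
      have iso1 : tpow B (m + n + 1) ≅ tpow B m ⊗ tpow B (n+1) :=
        eqToIso (congrArg (tpow B) (by omega)) ≪≫ tpowAddIso B m (n+1)
      have iso2 : tpow (Bᘁ : K) (m + n) ≅ tpow (Bᘁ : K) n ⊗ tpow (Bᘁ : K) m :=
        eqToIso (congrArg (tpow (Bᘁ : K)) (by omega)) ≪≫ tpowAddIso (Bᘁ : K) n m
      refine ⟨(tpow B (n+1) ⊗ tpow (Bᘁ : K) m) ⊗ Z, hq.ofIsoTarget ?_⟩
      exact whiskerRightIso (QIterIso B (m+n) ≪≫ whiskerRightIso iso1 _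
        ≪≫ whiskerLeftIso _ iso2
        ≪≫ swap23Iso (tpow B m) (tpow B (n+1)) (tpow (Bᘁ : K) n) (tpow (Bᘁ : K) m)) Z
        ≪≫ (α_ _ _ _)

end RelStable
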